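/- The Taylor expansion at ε = 0 of the distillation function f(ε) = [1 − (1−2ε)^{N/2−1}(2ε(N−1) + (1−2ε)^{N/2})] / [2(1 + (N−1)(1−2ε)^{N/2})], with N = 2^{k+2}, has vanishing constant, linear, and quadratic terms, and cubic coefficient (1 − 3·2^{k+1} + 2^{2k+3})/3. -/

import Mathlib

open Polynomial Filter

/-- Numerator polynomial of the distillation function, with `n = 2^(k+1)`. -/
noncomputable def dP (n : ℕ) : ℝ[X] :=
  C 1 - (C 1 - C 2 * X) ^ (n-1) * (C (2*(2*(n:ℝ)-1)) * X + (C 1 - C 2 * X) ^ n)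

/-- Denominator polynomial of the distillation function, with `n = 2^(k+1)`. -/
noncomputable def dQ (n : ℕ) : ℝ[X] :=
  C 2 * (C 1 + C (2*(n:ℝ)-1) * (C 1 - C 2 * X) ^ n)

/-- One quotient-rule step on a pair (numerator, denominator). -/
noncomputable def dstep (pq : ℝ[X] × ℝ[X]) : ℝ[X] × ℝ[X] :=
  (pq.1.derivative * pq.2 - pq.1 * pq.2.derivative, pq.2 * pq.2)

lemma deriv_ratio (p q : ℝ[X]) {x : ℝ} (hq : q.eval x ≠ 0) :
    deriv (fun y => p.eval y / q.eval y) x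
      = (p.derivative * q - p * q.derivative).eval x / (q * q).eval x := by
  have h := ((p.hasDerivAt x).div (q.hasDerivAt x) hq).deriv
  rw [show (fun y => p.eval y / q.eval y) = (fun y => p.eval y) / (fun y => q.eval y) from rfl, h]; simp only [eval_sub, eval_mul]; ring

lemma deriv_ratio_ev (p q : ℝ[X]) (hq : q.eval 0 ≠ 0) :
    deriv (fun y => p.eval y / q.eval y)
      =ᶠ[nhds (0:ℝ)] fun y => (p.derivative * q - p * q.derivative).eval y / (q * q).eval y := by
  have hev : ∀ᶠ x in nhds (0:ℝ), q.eval x ≠ 0 :=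
    (q.continuous_aeval).continuousAt.eventually_ne hq
  exact hev.mono fun x hx => deriv_ratio p q hx

lemma dcompute (n : ℕ) (hn : 2 ≤ n) :
    (dP n).eval 0 = 0 ∧
    (dstep (dP n, dQ n)).1.eval 0 = 0 ∧
    (dstep (dstep (dP n, dQ n))).1.eval 0 = 0 ∧
    (dstep (dstep (dstep (dP n, dQ n)))).1.eval 0
      / (dstep (dstep (dstep (dP n, dQ n)))).2.eval 0 / 6
      = ((n:ℝ)-1)*(2*(n:ℝ)-1)/3 := by
  rcases eq_or_lt_of_le hn with h | h
  · subst h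
    refine ⟨?_, ?_, ?_, ?_⟩ <;> norm_num [dstep, dP, dQ, derivative_pow]
  · have h1 : 1 ≤ n := by omega
    have h2 : 1 ≤ n - 1 := by omega
    have h3 : 1 ≤ n - 1 - 1 := by omega
    have c1 : ((n-1:ℕ):ℝ) = (n:ℝ)-1 := by push_cast [h1]; ring
    have c2 : ((n-1-1:ℕ):ℝ) = (n:ℝ)-2 := by push_cast [h1, h2]; ring
    have c3 : ((n-1-1-1:ℕ):ℝ) = (n:ℝ)-3 := by push_cast [h1, h2, h3]; ring
    have hn0 : (n:ℝ) ≠ 0 := by positivity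
    refine ⟨?_, ?_, ?_, ?_⟩
    · simp [dP]
    · simp [dstep, dP, dQ, derivative_pow, c1]; ring_nf; try tauto
    · simp [dstep, dP, dQ, derivative_pow, c1, c2]; ring_nf; try tauto
    · simp [dstep, dP, dQ, derivative_pow, c1, c2, c3]
      field_simp
      ring

lemma main_aux (n : ℕ) (hn : 2 ≤ n) (f : ℝ → ℝ)
    (hf : f = fun ε => (dP n).eval ε / (dQ n).eval ε) :
    f 0 = 0 ∧ deriv f 0 = 0 ∧ iteratedDeriv 2 f 0 = 0 ∧
      iteratedDeriv 3 f 0 / 6 = ((n:ℝ)-1)*(2*(n:ℝ)-1)/3 := by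
  obtain ⟨e0, e1, e2, e3⟩ := dcompute n hn
  have hnR : (2:ℝ) ≤ (n:ℝ) := by exact_mod_cast hn
  have hQ0 : (dQ n).eval 0 ≠ 0 := by
    simp [dQ]; nlinarith
  have hq1 : ((dstep (dP n, dQ n)).2).eval 0 ≠ 0 := by
    simp only [dstep, eval_mul]; exact mul_ne_zero hQ0 hQ0
  have hq2 : ((dstep (dstep (dP n, dQ n))).2).eval 0 ≠ 0 := by
    simp only [dstep, eval_mul]; exact mul_ne_zero (mul_ne_zero hQ0 hQ0) (mul_ne_zero hQ0 hQ0)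
  have h1 : deriv f =ᶠ[nhds (0:ℝ)]
      fun y => (dstep (dP n, dQ n)).1.eval y / (dstep (dP n, dQ n)).2.eval y := by
    rw [hf]; exact deriv_ratio_ev (dP n) (dQ n) hQ0
  have h2 : deriv (deriv f) =ᶠ[nhds (0:ℝ)]
      fun y => (dstep (dstep (dP n, dQ n))).1.eval y / (dstep (dstep (dP n, dQ n))).2.eval y :=
    h1.deriv.trans (deriv_ratio_ev _ _ hq1)
  have h3 : deriv (deriv (deriv f)) =ᶠ[nhds (0:ℝ)]
      fun y => (dstep (dstep (dstep (dP n, dQ n)))).1.eval y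
        / (dstep (dstep (dstep (dP n, dQ n)))).2.eval y :=
    h2.deriv.trans (deriv_ratio_ev _ _ hq2)
  refine ⟨?_, ?_, ?_, ?_⟩
  · rw [hf]; simp [e0]
  · rw [h1.eq_of_nhds, e1]; simp
  · rw [show iteratedDeriv 2 f = deriv (deriv f) by
      simp [iteratedDeriv_succ, iteratedDeriv_one]]
    rw [h2.eq_of_nhds, e2]; simp
  · rw [show iteratedDeriv 3 f = deriv (deriv (deriv f)) by
      simp [iteratedDeriv_succ, iteratedDeriv_one]]
    rw [h3.eq_of_nhds]; exact e3

/-- The Taylor expansion of the distillation function at `ε = 0` has vanishing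
constant, linear, and quadratic terms, and cubic coefficient
`(1 - 3·2^(k+1) + 2^(2k+3))/3`. -/
theorem distillation_taylor (k : ℕ)
    (f : ℝ → ℝ)
    (hf : f = fun ε =>
      (1 - (1 - 2 * ε) ^ (2 ^ (k + 2) / 2 - 1) *
        (2 * ε * (2 ^ (k + 2) - 1) + (1 - 2 * ε) ^ (2 ^ (k + 2) / 2))) /
      (2 * (1 + (2 ^ (k + 2) - 1) * (1 - 2 * ε) ^ (2 ^ (k + 2) / 2)))) :
    f 0 = 0 ∧ deriv f 0 = 0 ∧ iteratedDeriv 2 f 0 = 0 ∧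
      iteratedDeriv 3 f 0 / 6 =
        (1 - 3 * 2 ^ (k + 1) + 2 ^ (2 * k + 3) : ℝ) / 3 := by
  have hn : 2 ≤ 2^(k+1) := by
    calc 2 = 2^1 := rfl
    _ ≤ 2^(k+1) := Nat.pow_le_pow_right (by norm_num) (by omega)
  have hfP : f = fun ε => (dP (2^(k+1))).eval ε / (dQ (2^(k+1))).eval ε := by
    subst hf; funext ε
    have epow : 2^(k+2)/2 = 2^(k+1) := by rw [pow_succ]; omega
    have ecast : ((2:ℝ)^(k+2)) = 2*((2^(k+1) : ℕ) : ℝ) := by push_cast; rw [pow_succ]; ring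
    rw [epow, ecast]
    simp [dP, dQ]
    ring_nf
  obtain ⟨g0, g1, g2, g3⟩ := main_aux (2^(k+1)) hn f hfP
  refine ⟨g0, g1, g2, ?_⟩
  rw [g3]
  have : ((((2^(k+1):ℕ)):ℝ) - 1) * (2 * (((2^(k+1):ℕ)):ℝ) - 1) =
      (1 - 3 * 2 ^ (k + 1) + 2 ^ (2 * k + 3) : ℝ) := by
    push_cast
    rw [show 2*k+3 = (k+1)+(k+1)+1 by ring, pow_add, pow_add]
    ring
  rw [this]
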